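/- Let E be a finite directed graph with E¹ ≠ ∅ which is strongly connected (for all vertices v, w there is a path with range v and source w), and let p : E¹ → ℕ satisfy p(e) ≥ 1 for all e and p(e) > 1 for at least one e. Let M : (E¹ →₀ ℤ) → (E⁰ →₀ ℤ) be the ℤ-linear map with M(δ_e) = p(e)·δ_{r(e)} − δ_{s(e)}. Then: (i) the cokernel (E⁰ →₀ ℤ)/range(M) is a finite cyclic group; (ii) the kernel of M is a free abelian group of rank |E¹| − |E⁰|; and (iii) if the greatest common divisor of the set {p(μ) − p(ν) : μ, ν paths in E with the same source and the same range} equals 1 (p extended multiplicatively to paths), then M is surjective, i.e. the cokernel is trivial. -/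

import Mathlib

universe u v

/-- Paths in a directed graph with vertex set `V`, edge set `E`, and range and source maps
`r, s : E → V`.  `GPath r s z y` is a path with source `z` and range `y` (edges are adjoined
at the range end, and `cons e rest` requires `range(rest) = s e`). -/
inductive GPath {V : Type u} {E : Type v} (r s : E → V) : V → V → Type (max u v)
  | nil (v : V) : GPath r s v v
  | cons (e : E) {z : V} (rest : GPath r s z (s e)) : GPath r s z (r e)

/-- The multiplicative extension of the weight `p` to paths. -/
def GPath.weight {V : Type u} {E : Type v} {r s : E → V} (p : E → ℕ) :
    ∀ {z y : V}, GPath r s z y → ℕ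
  | _, _, GPath.nil _ => 1
  | _, _, GPath.cons e rest => p e * GPath.weight p rest

namespace GPath
variable {V : Type u} {E : Type v} {r s : E → V}

def comp : ∀ {z y x : V}, GPath r s y x → GPath r s z y → GPath r s z x
  | _, _, _, GPath.nil _, q => q
  | _, _, _, GPath.cons e rest, q => GPath.cons e (rest.comp q)

lemma weight_comp (p : E → ℕ) : ∀ {z y x : V} (P : GPath r s y x) (Q : GPath r s z y),
    weight p (P.comp Q) = weight p P * weight p Q
  | _, _, _, GPath.nil _, q => by simp [comp, weight]
  | _, _, _, GPath.cons e rest, q => by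
    simp [comp, weight, weight_comp p rest q, mul_assoc]

lemma one_le_weight (p : E → ℕ) (hp : ∀ e, 1 ≤ p e) :
    ∀ {z y : V} (P : GPath r s z y), 1 ≤ weight p P
  | _, _, GPath.nil _ => le_refl 1
  | _, _, GPath.cons e rest => by
    have := one_le_weight p hp rest
    simpa [weight] using Nat.mul_le_mul (hp e) this

end GPath

lemma mem_range_aux {V : Type u} {E : Type v} (r s : E → V) (p : E → ℕ)
    (M : (E →₀ ℤ) →+ (V →₀ ℤ))
    (hM : ∀ e, M (Finsupp.single e 1)
      = (p e : ℤ) • Finsupp.single (r e) 1 - Finsupp.single (s e) 1)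
    {z y : V} (P : GPath r s z y) :
    Finsupp.single z 1 - (GPath.weight p P : ℤ) • Finsupp.single y 1 ∈ M.range := by
  induction P with
  | nil v => simpa [GPath.weight] using M.range.zero_mem
  | cons e rest ih =>
    have h2 : M ((-(GPath.weight p rest : ℤ)) • Finsupp.single e 1) ∈ M.range := ⟨_, rfl⟩
    rw [map_zsmul, hM e] at h2
    have h3 := M.range.add_mem ih h2
    convert h3 using 1
    push_cast [GPath.weight]
    module

/-- **Statement 16.** Let `E` be a finite strongly connected directed graph with at least one
edge, and `p : E¹ → ℕ` with `p(e) ≥ 1` everywhere and `p(e) > 1` somewhere.  Let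
`M : ℤE¹ → ℤE⁰` be given by `M(δ_e) = p(e)·δ_{r(e)} − δ_{s(e)}`.  Then the cokernel of `M`
is a finite cyclic group, the kernel of `M` is free abelian of rank `|E¹| − |E⁰|`, and if
`gcd {p(μ) − p(ν) : μ, ν parallel paths} = 1` then `M` is surjective. -/
theorem weighted_incidence_matrix_kernel_cokernel
    (V : Type u) (E : Type v) [Fintype V] [Fintype E] (r s : E → V)
    (hE : Nonempty E)
    -- strong connectivity: for all `v, w` there is a path with range `v` and source `w`:
    (hconn : ∀ v w : V, Nonempty (GPath r s w v))
    (p : E → ℕ) (hp : ∀ e : E, 1 ≤ p e) (hbig : ∃ e : E, 1 < p e) :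
    let M : (E →₀ ℤ) →+ (V →₀ ℤ) :=
      Finsupp.liftAddHom (fun e =>
        (zmultiplesHom (V →₀ ℤ))
          ((p e : ℤ) • Finsupp.single (r e) 1 - Finsupp.single (s e) 1))
    -- (i) the cokernel is a finite cyclic group:
    (Finite ((V →₀ ℤ) ⧸ M.range) ∧ IsAddCyclic ((V →₀ ℤ) ⧸ M.range)) ∧
    -- (ii) the kernel is free abelian of rank `|E¹| − |E⁰|`:
    Nonempty ((M.ker) ≃+ (Fin (Fintype.card E - Fintype.card V) →₀ ℤ)) ∧
    -- (iii) if `gcd {p(μ) − p(ν)} = 1` (every common divisor is a unit) then `M` is onto: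
    ((∀ d : ℤ, (∀ x : ℤ,
        (∃ (a b : V) (μ ν : GPath r s a b),
          x = (GPath.weight p μ : ℤ) - (GPath.weight p ν : ℤ)) → d ∣ x) → IsUnit d) →
      Function.Surjective M) := by
  intro M
  have hM : ∀ e, M (Finsupp.single e 1)
      = (p e : ℤ) • Finsupp.single (r e) 1 - Finsupp.single (s e) 1 := by
    intro e; show Finsupp.liftAddHom _ _ = _; simp
  obtain ⟨e₀, he₀⟩ := hbig
  have key : ∀ {z y : V} (P : GPath r s z y),
      Finsupp.single z 1 - (GPath.weight p P : ℤ) • Finsupp.single y 1 ∈ M.range :=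
    fun P => mem_range_aux r s p M hM P
  set v₀ := r e₀ with hv₀
  have π : ∀ v : V, GPath r s v v₀ := fun v => (hconn v₀ v).some
  -- the loop at v₀ of weight > 1
  let L : GPath r s v₀ v₀ := GPath.cons e₀ ((hconn (s e₀) v₀).some)
  set W := GPath.weight p L with hWdef
  have hW : 1 < W := by
    have h1 := GPath.one_le_weight p hp ((hconn (s e₀) v₀).some)
    calc 1 < p e₀ * 1 := by omega
    _ ≤ p e₀ * GPath.weight p ((hconn (s e₀) v₀).some) := Nat.mul_le_mul_left _ h1
    _ = W := rfl
  -- quotient facts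
  set mk := QuotientAddGroup.mk' M.range with hmk
  set g : (V →₀ ℤ) ⧸ M.range := mk (Finsupp.single v₀ 1) with hg
  have hsm : ∀ v : V, mk (Finsupp.single v 1) = (GPath.weight p (π v) : ℤ) • g := by
    intro v
    rw [hg, ← map_zsmul]
    rw [QuotientAddGroup.mk'_eq_mk']
    exact ⟨-(Finsupp.single v 1 - (GPath.weight p (π v) : ℤ) • Finsupp.single v₀ 1),
      M.range.neg_mem (key (π v)), by abel⟩
  have hgen : ∀ x : (V →₀ ℤ), ∃ n : ℤ, mk x = n • g := by
    intro x
    induction x using Finsupp.induction with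
    | zero => exact ⟨0, by simp⟩
    | single_add v a f hv ha ih =>
      obtain ⟨n, hn⟩ := ih
      refine ⟨a * (GPath.weight p (π v)) + n, ?_⟩
      rw [map_add, hn, show (Finsupp.single v a : V →₀ ℤ) = a • Finsupp.single v 1 by
        simp [Finsupp.smul_single], map_zsmul, hsm v, smul_smul]
      exact (add_smul (a * (GPath.weight p (π v) : ℤ)) n g).symm
  have hcyc : IsAddCyclic ((V →₀ ℤ) ⧸ M.range) := by
    refine ⟨g, fun x => ?_⟩
    obtain ⟨y, rfl⟩ := QuotientAddGroup.mk'_surjective M.range x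
    obtain ⟨n, hn⟩ := hgen y
    exact ⟨n, hn.symm⟩
  have hord : ((W : ℤ) - 1) • g = 0 := by
    rw [hg, ← map_zsmul, QuotientAddGroup.mk'_apply, QuotientAddGroup.eq_zero_iff]
    have := M.range.neg_mem (key L)
    convert this using 1
    rw [← hWdef]
    module
  have hfinord : IsOfFinAddOrder g :=
    isOfFinAddOrder_iff_zsmul_eq_zero.2 ⟨(W : ℤ) - 1, by omega, hord⟩
  have hfin : Finite ((V →₀ ℤ) ⧸ M.range) := by
    rw [← Set.finite_univ_iff]
    refine hfinord.finite_zmultiples.subset (fun x _ => ?_)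
    obtain ⟨y, rfl⟩ := QuotientAddGroup.mk'_surjective M.range x
    obtain ⟨n, hn⟩ := hgen y
    exact ⟨n, hn.symm⟩
  refine ⟨⟨hfin, hcyc⟩, ?_, ?_⟩
  · -- (ii)
    classical
    set M' : (E →₀ ℤ) →ₗ[ℤ] (V →₀ ℤ) := M.toIntLinearMap with hM'def
    set K : Submodule ℤ (E →₀ ℤ) := LinearMap.ker M' with hK
    let bE : Module.Basis (Fin (Fintype.card E)) ℤ (E →₀ ℤ) :=
      (Finsupp.basisSingleOne).reindex (Fintype.equivFin E)
    let bV : Module.Basis (Fin (Fintype.card V)) ℤ (V →₀ ℤ) :=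
      (Finsupp.basisSingleOne).reindex (Fintype.equivFin V)
    obtain ⟨k, bK⟩ := K.basisOfPid bE
    obtain ⟨m, bR⟩ := (LinearMap.range M').basisOfPid bV
    haveI : Module.Finite ℤ (V →₀ ℤ) := Module.Finite.of_basis bV
    haveI : Module.Finite ℤ (E →₀ ℤ) := Module.Finite.of_basis bE
    haveI : Module.Finite ℤ ↥(LinearMap.range M') := Module.Finite.of_basis bR
    haveI : Module.Finite ℤ ↥K := Module.Finite.of_basis bK
    haveI : Module.Free ℤ ↥(LinearMap.range M') := Module.Free.of_basis bR
    haveI := hfin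
    have hn0 : 0 < Nat.card ((V →₀ ℤ) ⧸ M.range) := Nat.card_pos
    have hnx : ∀ x : (V →₀ ℤ),
        ((Nat.card ((V →₀ ℤ) ⧸ M.range) : ℤ)) • x ∈ LinearMap.range M' := by
      intro x
      have h0 : mk ((Nat.card ((V →₀ ℤ) ⧸ M.range) : ℤ) • x) = 0 := by
        rw [map_zsmul, natCast_zsmul, card_nsmul_eq_zero']
      rw [hmk, QuotientAddGroup.mk'_apply, QuotientAddGroup.eq_zero_iff] at h0
      obtain ⟨y, hy⟩ := h0
      exact ⟨y, hy⟩
    have hfrV : Module.finrank ℤ (V →₀ ℤ) = Fintype.card V := by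
      rw [Module.finrank_eq_card_basis bV, Fintype.card_fin]
    have hr1 : Module.finrank ℤ ↥(LinearMap.range M') ≤ Fintype.card V := by
      have := Submodule.finrank_le (LinearMap.range M')
      rwa [hfrV] at this
    have hr2 : Fintype.card V ≤ Module.finrank ℤ ↥(LinearMap.range M') := by
      let φ : (V →₀ ℤ) →ₗ[ℤ] LinearMap.range M' :=
        LinearMap.codRestrict _
          ((Nat.card ((V →₀ ℤ) ⧸ M.range) : ℤ) • LinearMap.id) hnx
      have hinj : Function.Injective φ := by
        intro x y hxy
        have h1 : (Nat.card ((V →₀ ℤ) ⧸ M.range) : ℤ) • x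
            = (Nat.card ((V →₀ ℤ) ⧸ M.range) : ℤ) • y := congrArg Subtype.val hxy
        exact smul_right_injective _ (by exact_mod_cast hn0.ne') h1
      have := LinearMap.finrank_le_finrank_of_injective hinj
      rwa [hfrV] at this
    obtain ⟨σ, hσ⟩ := Module.projective_lifting_property M'.rangeRestrict LinearMap.id
        (LinearMap.surjective_rangeRestrict M')
    have hσ' : ∀ y : LinearMap.range M', M' (σ y) = (y : V →₀ ℤ) := by
      intro y
      have := congrArg Subtype.val (LinearMap.congr_fun hσ y)
      simpa using this
    let D : (E →₀ ℤ) →ₗ[ℤ] (E →₀ ℤ) := LinearMap.id - σ.comp M'.rangeRestrict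
    have hmem : ∀ x : (E →₀ ℤ), (D x) ∈ K := by
      intro x
      simp [D, hK, LinearMap.mem_ker, map_sub, hσ']
    let A : (E →₀ ℤ) →ₗ[ℤ] (K × LinearMap.range M') :=
      LinearMap.prod (LinearMap.codRestrict K D hmem) M'.rangeRestrict
    let B : (K × LinearMap.range M') →ₗ[ℤ] (E →₀ ℤ) :=
      (K.subtype.comp (LinearMap.fst ℤ _ _)) + (σ.comp (LinearMap.snd ℤ _ _))
    have hBA : B.comp A = LinearMap.id := by
      ext x
      simp [A, B, D]
    have hAB : A.comp B = LinearMap.id := by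
      apply LinearMap.ext
      rintro ⟨⟨x0, hx0⟩, y⟩
      have hf0 : M'.rangeRestrict x0 = 0 := by
        apply Subtype.ext
        simpa using (LinearMap.mem_ker.1 hx0)
      have hfσ : M'.rangeRestrict (σ y) = y := LinearMap.congr_fun hσ y
      apply Prod.ext
      · apply Subtype.ext
        simp [A, B, D, map_add, hf0, hfσ]
      · simp [A, B, D, map_add, hf0, hfσ]
    let eqv : (E →₀ ℤ) ≃ₗ[ℤ] (K × LinearMap.range M') := LinearEquiv.ofLinear A B hAB hBA
    have h2 := eqv.finrank_eq
    rw [Module.finrank_prod, Module.finrank_eq_card_basis bK,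
      Module.finrank_eq_card_basis bE, Fintype.card_fin, Fintype.card_fin] at h2
    have hrange : Module.finrank ℤ ↥(LinearMap.range M') = Fintype.card V :=
      le_antisymm hr1 hr2
    have hkk : k = Fintype.card E - Fintype.card V := by omega
    have e1 : (↥M.ker) ≃+ ↥K :=
      { toFun := fun x => ⟨x.1, x.2⟩
        invFun := fun x => ⟨x.1, x.2⟩
        left_inv := fun _ => rfl
        right_inv := fun _ => rfl
        map_add' := fun _ _ => rfl }
    exact ⟨e1.trans ((bK.repr.toAddEquiv).trans (Finsupp.domCongr (finCongr hkk)))⟩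
  · -- (iii)
    intro hgcd
    set I : AddSubgroup ℤ :=
      M.range.comap (zmultiplesHom (V →₀ ℤ) (Finsupp.single v₀ 1)) with hI
    have hmemI' : ∀ n : ℤ, n ∈ I ↔ n • (Finsupp.single v₀ 1 : V →₀ ℤ) ∈ M.range := by
      intro n; rw [hI, AddSubgroup.mem_comap, zmultiplesHom_apply]
    obtain ⟨d, hd⟩ := Int.subgroup_cyclic I
    have hmemI : ∀ n : ℤ, n ∈ I ↔ d ∣ n := by
      intro n
      rw [hd, AddSubgroup.mem_closure_singleton]
      constructor
      · rintro ⟨k, rfl⟩; exact ⟨k, by rw [smul_eq_mul, mul_comm]⟩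
      · rintro ⟨k, rfl⟩; exact ⟨k, by rw [smul_eq_mul, mul_comm]⟩
    have hloop : ∀ L' : GPath r s v₀ v₀, d ∣ (GPath.weight p L' : ℤ) - 1 := by
      intro L'
      have h1 : ((1 : ℤ) - (GPath.weight p L' : ℤ)) ∈ I := by
        rw [hmemI']
        convert key L' using 1
        module
      have := (hmemI _).1 h1
      simpa [neg_sub] using dvd_neg.2 this
    have hdvd : ∀ x : ℤ, (∃ (a b : V) (μ ν : GPath r s a b),
        x = (GPath.weight p μ : ℤ) - (GPath.weight p ν : ℤ)) → d ∣ x := by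
      rintro x ⟨a, b, μ, ν, rfl⟩
      have β : GPath r s v₀ a := (hconn a v₀).some
      have γ : GPath r s b v₀ := (hconn v₀ b).some
      have h1 := hloop (γ.comp (μ.comp β))
      have h2 := hloop (γ.comp (ν.comp β))
      rw [GPath.weight_comp, GPath.weight_comp] at h1 h2
      push_cast at h1 h2
      set wγ : ℤ := (GPath.weight p γ : ℤ)
      set wβ : ℤ := (GPath.weight p β : ℤ)
      have h3 : d ∣ (wγ * wβ) * ((GPath.weight p μ : ℤ) - (GPath.weight p ν : ℤ)) := by
        have := dvd_sub h1 h2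
        convert this using 1
        rfl
        ring
      obtain ⟨k, hk⟩ := h1
      have hco : IsCoprime d (wγ * wβ) := ⟨-k, (GPath.weight p μ : ℤ), by linear_combination hk⟩
      exact hco.dvd_of_dvd_mul_left h3
    have hud : IsUnit d := hgcd d hdvd
    have hδ : (Finsupp.single v₀ 1 : V →₀ ℤ) ∈ M.range := by
      have h1 : (1 : ℤ) ∈ I := (hmemI 1).2 (isUnit_iff_dvd_one.mp hud)
      simpa using (hmemI' 1).1 h1
    have hall : ∀ v : V, (Finsupp.single v 1 : V →₀ ℤ) ∈ M.range := by
      intro v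
      have h2 := M.range.zsmul_mem hδ (GPath.weight p (π v) : ℤ)
      have h3 := M.range.add_mem (key (π v)) h2
      convert h3 using 1
      module
    have htop : M.range = ⊤ := by
      rw [eq_top_iff]
      rintro x -
      induction x using Finsupp.induction with
      | zero => exact M.range.zero_mem
      | single_add v a f hv ha ih =>
        refine M.range.add_mem ?_ ih
        have := M.range.zsmul_mem (hall v) a
        simpa [Finsupp.smul_single] using this
    exact AddMonoidHom.range_eq_top.1 htop
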